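/- arXiv:2111.12896 — 3 statements merged into one kernel-verified Lean document; each statement's English description precedes it below -/
import Mathlib

section
/- Let W = ∑_{i=1}^k w_i² where w_1, …, w_k are i.i.d. standard normal random variables, and let 0 < ε < 1. Then P(W ≥ (1+ε) k) ≤ ((1+ε) e^{−ε})^{k/2}. -/
open ProbabilityTheory MeasureTheory Real

lemma gauss_pdf_mul (t : ℝ) (x : ℝ) :
    gaussianPDFReal 0 1 x * Real.exp (t * x ^ 2)
      = (Real.sqrt (2 * π))⁻¹ * Real.exp (-(1/2 - t) * x ^ 2) := by
  simp only [gaussianPDFReal, NNReal.coe_one, mul_one, sub_zero]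
  rw [mul_assoc, ← Real.exp_add]
  ring_nf

lemma gaussianReal_eq_withDensity_toNNReal :
    gaussianReal 0 1 = volume.withDensity
      (fun x => ((gaussianPDFReal 0 1 x).toNNReal : ENNReal)) := by
  rw [gaussianReal_of_var_ne_zero _ one_ne_zero]
  rfl

lemma integral_exp_sq_gaussian {t : ℝ} (ht : t < 1/2) :
    ∫ x, Real.exp (t * x ^ 2) ∂(gaussianReal 0 1) = (Real.sqrt (1 - 2*t))⁻¹ := by
  have hb : (0:ℝ) < 1/2 - t := by linarith
  rw [gaussianReal_eq_withDensity_toNNReal,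
    integral_withDensity_eq_integral_smul
      ((measurable_gaussianPDFReal 0 1).real_toNNReal)]
  have : ∀ x : ℝ, (gaussianPDFReal 0 1 x).toNNReal • Real.exp (t * x ^ 2)
      = (Real.sqrt (2 * π))⁻¹ * Real.exp (-(1/2 - t) * x ^ 2) := by
    intro x
    rw [NNReal.smul_def, smul_eq_mul, Real.coe_toNNReal _ (gaussianPDFReal_nonneg 0 1 x),
      gauss_pdf_mul]
  simp_rw [this]
  rw [integral_const_mul, integral_gaussian]
  rw [show (1:ℝ) - 2*t = 2*(1/2 - t) by ring,
    Real.sqrt_mul (by norm_num : (0:ℝ) ≤ 2),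
    Real.sqrt_mul (by norm_num : (0:ℝ) ≤ 2),
    Real.sqrt_div pi_pos.le]
  have h1 : Real.sqrt π ≠ 0 := by positivity
  have h2 : Real.sqrt 2 ≠ 0 := by positivity
  have h3 : Real.sqrt (1/2 - t) ≠ 0 := by positivity
  field_simp

lemma integrable_exp_sq_gaussian {t : ℝ} (ht : t < 1/2) :
    Integrable (fun x => Real.exp (t * x ^ 2)) (gaussianReal 0 1) := by
  have hb : (0:ℝ) < 1/2 - t := by linarith
  rw [gaussianReal_eq_withDensity_toNNReal,
    integrable_withDensity_iff
      ((measurable_gaussianPDFReal 0 1).real_toNNReal.coe_nnreal_ennreal)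
      (ae_of_all _ fun x => ENNReal.coe_lt_top)]
  have : ∀ x : ℝ, Real.exp (t * x ^ 2) * ((((gaussianPDFReal 0 1 x).toNNReal : ENNReal)).toReal)
      = (Real.sqrt (2 * π))⁻¹ * Real.exp (-(1/2 - t) * x ^ 2) := by
    intro x
    rw [ENNReal.coe_toReal, Real.coe_toNNReal _ (gaussianPDFReal_nonneg 0 1 x), mul_comm,
      gauss_pdf_mul]
  simp_rw [this]
  exact (integrable_exp_neg_mul_sq hb).const_mul _

theorem chi_sq_upper_tail {Ω : Type*} [MeasureSpace Ω] {μ : Measure Ω}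
    [IsProbabilityMeasure μ] {k : ℕ} (w : Fin k → Ω → ℝ)
    (hmeas : ∀ i, Measurable (w i))
    (hindep : iIndepFun w μ)
    (hmap : ∀ i, Measure.map (w i) μ = gaussianReal 0 1)
    (ε : ℝ) (hε0 : 0 < ε) (hε1 : ε < 1) :
    (μ {ω | (1 + ε) * k ≤ ∑ i, w i ω ^ 2}).toReal ≤
      ((1 + ε) * Real.exp (-ε)) ^ ((k : ℝ) / 2) := by
  have hεp : (0:ℝ) < 1 + ε := by linarith
  set t : ℝ := ε / (2 * (1 + ε)) with ht_def
  have ht0 : 0 ≤ t := by positivity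
  have ht2 : t < 1/2 := by
    rw [ht_def, div_lt_div_iff₀ (by linarith) (by norm_num)]
    linarith
  have h1mt : 1 - 2*t = (1 + ε)⁻¹ := by
    rw [ht_def]
    field_simp
    ring
  set Y : Fin k → Ω → ℝ := fun i ω => w i ω ^ 2 with hY_def
  have hYmeas : ∀ i, Measurable (Y i) := fun i => (hmeas i).pow_const 2
  have hindep2 : iIndepFun Y μ :=
    hindep.comp (fun _ (x : ℝ) => x ^ 2) (fun _ => measurable_id.pow_const 2)
  have hint : ∀ i, Integrable (fun ω => Real.exp (t * Y i ω)) μ := by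
    intro i
    have h := integrable_exp_sq_gaussian ht2
    rw [← hmap i, integrable_map_measure
      (by measurability : Measurable fun x : ℝ => Real.exp (t * x ^ 2)).aestronglyMeasurable
      (hmeas i).aemeasurable] at h
    exact h
  have hmgf : ∀ i, mgf (Y i) μ t = Real.sqrt (1 + ε) := by
    intro i
    have : mgf (Y i) μ t = ∫ x, Real.exp (t * x ^ 2) ∂(gaussianReal 0 1) := by
      rw [mgf, ← hmap i, integral_map (hmeas i).aemeasurable (by measurability : Measurable fun x : ℝ => Real.exp (t * x ^ 2)).aestronglyMeasurable]
    rw [this, integral_exp_sq_gaussian ht2, h1mt, Real.sqrt_inv, inv_inv]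
  have hint_sum : Integrable (fun ω => Real.exp (t * (∑ i, Y i) ω)) μ :=
    hindep2.integrable_exp_mul_sum hYmeas (fun i _ => hint i)
  have hch := measure_ge_le_exp_mul_mgf (X := ∑ i, Y i) (μ := μ) ((1 + ε) * k) ht0 hint_sum
  have hset : {ω | (1 + ε) * k ≤ ∑ i, w i ω ^ 2} = {ω | (1 + ε) * k ≤ (∑ i, Y i) ω} := by
    ext ω
    simp [Finset.sum_apply, hY_def]
  rw [hset]
  refine hch.trans_eq ?_
  rw [hindep2.mgf_sum hYmeas Finset.univ]
  simp_rw [hmgf]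
  rw [Finset.prod_const, Finset.card_univ, Fintype.card_fin]
  have hsqrt : Real.sqrt (1 + ε) ^ k = (1 + ε) ^ ((k : ℝ) / 2) := by
    rw [Real.sqrt_eq_rpow, ← Real.rpow_natCast ((1 + ε) ^ ((1:ℝ)/2)) k,
      ← Real.rpow_mul hεp.le]
    ring_nf
  have hexp : -t * ((1 + ε) * k) = -ε * ((k : ℝ) / 2) := by
    rw [ht_def]
    field_simp
  rw [hsqrt, hexp, Real.mul_rpow hεp.le (Real.exp_pos _).le, ← Real.exp_mul]
  ring
end

section
/- Let W = ∑_{i=1}^k w_i² where w_1, …, w_k are i.i.d. standard normal random variables, and let 0 < ε < 1. Then P(W ≤ (1−ε) k) ≤ ((1−ε) e^{ε})^{k/2}. -/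
open ProbabilityTheory MeasureTheory
open scoped NNReal ENNReal Real

lemma gauss_sq_integral {t : ℝ} (ht : t < 1/2) :
    ∫ x, Real.exp (t * x ^ 2) ∂(gaussianReal 0 1) = Real.sqrt (1 - 2*t)⁻¹ := by
  have hb : 0 < 1/2 - t := by linarith
  rw [gaussianReal_of_var_ne_zero 0 one_ne_zero]
  have hpdf : gaussianPDF 0 1 = fun x => ((Real.toNNReal (gaussianPDFReal 0 1 x) : ℝ≥0) : ℝ≥0∞) := rfl
  rw [hpdf, integral_withDensity_eq_integral_smul
    ((measurable_gaussianPDFReal 0 1).real_toNNReal)]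
  have heq : ∀ x : ℝ, (Real.toNNReal (gaussianPDFReal 0 1 x) : ℝ≥0) • Real.exp (t * x ^ 2)
      = (Real.sqrt (2 * Real.pi))⁻¹ * Real.exp (-(1/2 - t) * x ^ 2) := by
    intro x
    rw [NNReal.smul_def, smul_eq_mul, Real.coe_toNNReal _ (gaussianPDFReal_nonneg 0 1 x)]
    simp only [gaussianPDFReal, NNReal.coe_one, mul_one, sub_zero]
    rw [mul_assoc, ← Real.exp_add]
    congr 1
    ring
  simp_rw [heq]
  rw [integral_const_mul, integral_gaussian]
  rw [← Real.sqrt_inv, ← Real.sqrt_mul (by positivity)]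
  congr 1
  have hπ : Real.pi ≠ 0 := Real.pi_ne_zero
  have h2 : (1:ℝ) - 2 * t ≠ 0 := by linarith
  have h3 : (1:ℝ)/2 - t ≠ 0 := by linarith
  field_simp

theorem chi_sq_lower_tail {Ω : Type*} [MeasureSpace Ω] {μ : Measure Ω}
    [IsProbabilityMeasure μ] {k : ℕ} (w : Fin k → Ω → ℝ)
    (hmeas : ∀ i, Measurable (w i))
    (hindep : iIndepFun w μ)
    (hmap : ∀ i, Measure.map (w i) μ = gaussianReal 0 1)
    (ε : ℝ) (hε0 : 0 < ε) (hε1 : ε < 1) :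
    (μ {ω | ∑ i, w i ω ^ 2 ≤ (1 - ε) * k}).toReal ≤
      ((1 - ε) * Real.exp ε) ^ ((k : ℝ) / 2) := by
  have h1ε : (0:ℝ) < 1 - ε := by linarith
  set t : ℝ := -ε / (2 * (1 - ε)) with ht_def
  have ht0 : t < 0 := by
    apply div_neg_of_neg_of_pos <;> [linarith; positivity]
  have h12t : 1 - 2*t = (1 - ε)⁻¹ := by
    rw [ht_def]; field_simp; ring
  set X : Ω → ℝ := fun ω => ∑ i, w i ω ^ 2 with hX_def
  have hXmeas : Measurable X := by
    apply Finset.measurable_sum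
    exact fun i _ => (hmeas i).pow_const 2
  have hXnonneg : ∀ ω, 0 ≤ X ω := fun ω =>
    Finset.sum_nonneg fun i _ => sq_nonneg _
  have hint : Integrable (fun ω => Real.exp (t * X ω)) μ := by
    refine (integrable_const 1).mono' ((hXmeas.const_mul t).exp.aestronglyMeasurable) ?_
    filter_upwards with ω
    rw [Real.norm_eq_abs, abs_of_pos (Real.exp_pos _)]
    exact Real.exp_le_one_iff.mpr (mul_nonpos_of_nonpos_of_nonneg ht0.le (hXnonneg ω))
  have hchernoff := measure_le_le_exp_mul_mgf (μ := μ) (X := X) ((1 - ε) * k) ht0.le hint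
  refine hchernoff.trans ?_
  -- compute mgf
  have hsqindep : iIndepFun (fun i ω => w i ω ^ 2) μ :=
    hindep.comp (fun _ x => x ^ 2) (fun _ => measurable_id.pow_const 2)
  have hmgf : mgf X μ t = Real.sqrt (1 - ε) ^ k := by
    have hXsum : X = ∑ i, (fun ω => w i ω ^ 2) := by
      funext ω; simp [hX_def]
    rw [hXsum, hsqindep.mgf_sum (fun i => (hmeas i).pow_const 2)]
    have hone : ∀ i : Fin k, mgf (fun ω => w i ω ^ 2) μ t = Real.sqrt (1 - ε) := by
      intro i
      have h1 := integral_map (μ := μ) (φ := w i) (f := fun x => Real.exp (t * x ^ 2))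
        (hmeas i).aemeasurable
        ((Measurable.exp ((measurable_id.pow_const 2).const_mul t)).aestronglyMeasurable)
      rw [show mgf (fun ω => w i ω ^ 2) μ t
          = ∫ ω, Real.exp (t * w i ω ^ 2) ∂μ from rfl, ← h1, hmap i,
        gauss_sq_integral (by linarith), h12t, inv_inv]
    simp [hone]
  rw [hmgf]
  have hexp : -t * ((1 - ε) * k) = ε * k / 2 := by
    rw [ht_def]; field_simp
  rw [hexp]
  have hsqrt : Real.sqrt (1 - ε) ^ k = (1 - ε) ^ ((k:ℝ)/2) := by
    rw [← Real.rpow_natCast (Real.sqrt (1 - ε)) k, Real.sqrt_eq_rpow,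
      ← Real.rpow_mul h1ε.le]
    congr 1
    ring
  rw [hsqrt, Real.mul_rpow h1ε.le (Real.exp_pos _).le]
  have hexp2 : Real.exp ε ^ ((k:ℝ)/2) = Real.exp (ε * k / 2) := by
    rw [← Real.exp_mul]; ring_nf
  rw [hexp2]
  exact le_of_eq (mul_comm _ _)
end

section
/- Let W = ∑_{i=1}^k w_i² with w_1, …, w_k i.i.d. standard normal, and 0 < ε < 1. Then P(W ≤ (1−ε) k) ≤ exp(−(k/4)(ε² − ε³)). -/
open ProbabilityTheory MeasureTheory
open scoped NNReal ENNReal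

/-- `log (1 - x) ≤ -x - x^2/2` for `0 ≤ x < 1`. -/
lemma log_one_sub_le_aux {x : ℝ} (h0 : 0 ≤ x) (h1 : x < 1) :
    Real.log (1 - x) ≤ -x - x ^ 2 / 2 := by
  have habs : |x| < 1 := by rw [abs_of_nonneg h0]; exact h1
  have hsum := Real.hasSum_pow_div_log_of_abs_lt_one habs
  have h2 : ∑ i ∈ Finset.range 2, x ^ (i + 1) / ((i : ℝ) + 1) ≤ -Real.log (1 - x) := by
    refine sum_le_hasSum (L := SummationFilter.unconditional ℕ) _ (fun i _ => ?_) ?_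
    · positivity
    · exact_mod_cast hsum
  have hx : ∑ i ∈ Finset.range 2, x ^ (i + 1) / ((i : ℝ) + 1) = x + x ^ 2 / 2 := by
    simp [Finset.sum_range_succ]
    norm_num
  rw [hx] at h2
  linarith

/-- Gaussian mgf of the square. -/
lemma integral_exp_mul_sq_gaussianReal {t : ℝ} (ht : t < 1 / 2) :
    ∫ x, Real.exp (t * x ^ 2) ∂(gaussianReal 0 1) = Real.sqrt (1 / (1 - 2 * t)) := by
  rw [gaussianReal_of_var_ne_zero _ one_ne_zero]
  have hpdf : (gaussianPDF 0 1)
      = fun x => ((Real.toNNReal (gaussianPDFReal 0 1 x)) : ℝ≥0∞) := by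
    funext x; rfl
  rw [hpdf, integral_withDensity_eq_integral_smul
    ((measurable_gaussianPDFReal 0 1).real_toNNReal)]
  have hval : ∀ x : ℝ, (Real.toNNReal (gaussianPDFReal 0 1 x)) • Real.exp (t * x ^ 2)
      = (Real.sqrt (2 * Real.pi))⁻¹ * Real.exp (-(1 / 2 - t) * x ^ 2) := by
    intro x
    rw [NNReal.smul_def, Real.coe_toNNReal _ (gaussianPDFReal_nonneg 0 1 x), smul_eq_mul]
    unfold gaussianPDFReal
    rw [mul_assoc, ← Real.exp_add]
    congr 2
    · push_cast; norm_num
    · push_cast; ring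
  simp_rw [hval]
  rw [integral_const_mul, integral_gaussian]
  have hb : (0 : ℝ) < 1 / 2 - t := by linarith
  have hπ : (0 : ℝ) < Real.pi := Real.pi_pos
  rw [← Real.sqrt_inv, ← Real.sqrt_mul (by positivity)]
  congr 1
  have h12 : (0 : ℝ) < 1 - 2 * t := by linarith
  have hd : (0 : ℝ) < Real.pi * 2 - Real.pi * t * 4 := by nlinarith
  field_simp [hπ.ne', hb.ne', h12.ne', hd.ne']

theorem chi_sq_lower_tail_exp {Ω : Type*} [MeasureSpace Ω] {μ : Measure Ω}
    [IsProbabilityMeasure μ] {k : ℕ} (w : Fin k → Ω → ℝ)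
    (hmeas : ∀ i, Measurable (w i))
    (hindep : iIndepFun w μ)
    (hmap : ∀ i, Measure.map (w i) μ = gaussianReal 0 1)
    (ε : ℝ) (hε0 : 0 < ε) (hε1 : ε < 1) :
    (μ {ω | ∑ i, w i ω ^ 2 ≤ (1 - ε) * k}).toReal ≤
      Real.exp (-((k : ℝ) / 4) * (ε ^ 2 - ε ^ 3)) := by
  have h1ε : (0 : ℝ) < 1 - ε := by linarith
  set t : ℝ := -ε / (2 * (1 - ε)) with ht_def
  have ht : t ≤ 0 := div_nonpos_of_nonpos_of_nonneg (by linarith) (by linarith)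
  have ht2 : 1 - 2 * t = (1 - ε)⁻¹ := by
    rw [ht_def]; rw [eq_comm, inv_eq_iff_eq_inv, eq_comm, inv_eq_one_div]; field_simp [h1ε.ne']; ring
  have ht2' : t < 1 / 2 := by
    have := inv_pos.mpr h1ε
    nlinarith
  set X : Fin k → Ω → ℝ := fun i ω => w i ω ^ 2 with hX_def
  have hXmeas : ∀ i, Measurable (X i) := fun i => (hmeas i).pow_const 2
  have hXindep : iIndepFun X μ :=
    hindep.comp (fun _ x => x ^ 2) (fun _ => measurable_id.pow_const 2)
  have hmgf : ∀ i, mgf (X i) μ t = Real.sqrt (1 - ε) := by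
    intro i
    have h1 : mgf (X i) μ t = ∫ x, Real.exp (t * x ^ 2) ∂(Measure.map (w i) μ) := by
      rw [integral_map (hmeas i).aemeasurable
        (Measurable.aestronglyMeasurable (by fun_prop))]
      rfl
    rw [h1, hmap i, integral_exp_mul_sq_gaussianReal ht2', ht2, one_div, inv_inv]
  have hint : Integrable (fun ω => Real.exp (t * ∑ i, X i ω)) μ := by
    refine Integrable.mono' (integrable_const 1) ?_ ?_
    · exact Measurable.aestronglyMeasurable (by fun_prop)
    · refine Filter.Eventually.of_forall fun ω => ?_
      rw [Real.norm_eq_abs, abs_of_pos (Real.exp_pos _), ← Real.exp_zero]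
      apply Real.exp_le_exp.mpr
      exact mul_nonpos_of_nonpos_of_nonneg ht
        (Finset.sum_nonneg fun i _ => sq_nonneg _)
  have hcher := measure_le_le_exp_mul_mgf (X := fun ω => ∑ i, X i ω) (μ := μ)
    ((1 - ε) * k) ht hint
  have hsum_eq : (fun ω => ∑ i, X i ω) = ∑ i, X i := by
    funext ω; simp
  have hmgf_sum : mgf (fun ω => ∑ i, X i ω) μ t = Real.sqrt (1 - ε) ^ k := by
    rw [hsum_eq, hXindep.mgf_sum hXmeas Finset.univ]
    simp_rw [hmgf]
    rw [Finset.prod_const, Finset.card_univ, Fintype.card_fin]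
  rw [hmgf_sum] at hcher
  refine le_trans hcher ?_
  -- final computation
  have hlog : Real.log (1 - ε) ≤ -ε - ε ^ 2 / 2 := log_one_sub_le_aux hε0.le hε1
  have hpow : Real.sqrt (1 - ε) ^ k = Real.exp ((k : ℝ) * (Real.log (1 - ε) / 2)) := by
    rw [← Real.log_sqrt h1ε.le, Real.exp_nat_mul, Real.exp_log (Real.sqrt_pos.mpr h1ε)]
  have hlin : -t * ((1 - ε) * k) = ε * k / 2 := by
    rw [ht_def]
    field_simp [h1ε.ne']
  rw [hpow, hlin, ← Real.exp_add, Real.exp_le_exp]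
  have hk : (0 : ℝ) ≤ k := Nat.cast_nonneg k
  nlinarith [mul_le_mul_of_nonneg_left hlog hk, mul_nonneg hk (pow_nonneg hε0.le 3)]
end
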